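/- Let T : ℝ → ℝ³ be given by T(θ) = √(1-n²)·(sinh(√(1+m²) θ), cosh(√(1+m²) θ), m) where m = n/√(1-n²) and |n| < 1. Then T satisfies: (i) g(T(θ), T(θ)) = 1 where g(u,v) = -u₁v₁ + u₂v₂ + u₃v₃; (ii) the third component g(T(θ), e₃) = n is constant, where e₃ = (0,0,1); and (iii) the ODE T''' - (1+m²)T' = 0. -/

import Mathlib

noncomputable section
open Real

/-- Lorentzian metric of Minkowski 3-space E₁³. -/
def g (u v : ℝ × ℝ × ℝ) : ℝ := -(u.1 * v.1) + u.2.1 * v.2.1 + u.2.2 * v.2.2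

theorem stmt4 (n m : ℝ) (hn : |n| < 1) (hm : m = n / Real.sqrt (1 - n ^ 2))
    (T : ℝ → ℝ × ℝ × ℝ)
    (hT : ∀ θ, T θ = Real.sqrt (1 - n ^ 2) •
      (Real.sinh (Real.sqrt (1 + m ^ 2) * θ),
       Real.cosh (Real.sqrt (1 + m ^ 2) * θ), m)) :
    (∀ θ, g (T θ) (T θ) = 1) ∧
    (∀ θ, g (T θ) ((0 : ℝ), (0 : ℝ), (1 : ℝ)) = n) ∧
    (∀ θ, deriv (deriv (deriv T)) θ - (1 + m ^ 2) • deriv T θ = 0) := by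
  have h1 : (0:ℝ) < 1 - n ^ 2 := by
    have := abs_lt.mp hn
    nlinarith
  set a := Real.sqrt (1 - n ^ 2) with ha
  set k := Real.sqrt (1 + m ^ 2) with hk
  have ha2 : a ^ 2 = 1 - n ^ 2 := Real.sq_sqrt h1.le
  have hapos : 0 < a := Real.sqrt_pos.mpr h1
  have hmn : a * m = n := by
    rw [hm]; field_simp
  have hk2 : k ^ 2 = 1 + m ^ 2 := Real.sq_sqrt (by positivity)
  have hT' : T = fun θ => (a * Real.sinh (k * θ), a * Real.cosh (k * θ), a * m) := by
    funext θ; rw [hT θ]; simp [Prod.smul_def, smul_eq_mul]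
  have hak : a ^ 2 * (1 + m ^ 2) = 1 := by
    linear_combination ha2 + (a * m + n) * hmn
  refine ⟨?_, ?_, ?_⟩
  · intro θ
    rw [hT']
    simp only [g]
    have hc := Real.cosh_sq_sub_sinh_sq (k * θ)
    nlinarith [hc, hak]
  · intro θ
    rw [hT']
    simp only [g]
    simp [hmn]
  · -- derivatives
    have hd1 : ∀ θ, HasDerivAt T (a * k * Real.cosh (k * θ), a * k * Real.sinh (k * θ), 0) θ := by
      intro θ
      rw [hT']
      have hkθ : HasDerivAt (fun θ : ℝ => k * θ) k θ := by
        simpa using (hasDerivAt_id θ).const_mul k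
      have h1' : HasDerivAt (fun θ => a * Real.sinh (k * θ)) (a * k * Real.cosh (k * θ)) θ := by
        have := ((Real.hasDerivAt_sinh (k * θ)).comp θ hkθ).const_mul a
        simpa [mul_comm, mul_assoc, mul_left_comm] using this
      have h2' : HasDerivAt (fun θ => a * Real.cosh (k * θ)) (a * k * Real.sinh (k * θ)) θ := by
        have := ((Real.hasDerivAt_cosh (k * θ)).comp θ hkθ).const_mul a
        simpa [mul_comm, mul_assoc, mul_left_comm] using this
      exact HasDerivAt.prodMk h1' (HasDerivAt.prodMk h2' (hasDerivAt_const θ (a * m)))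
    have hD1 : deriv T = fun θ => (a * k * Real.cosh (k * θ), a * k * Real.sinh (k * θ), (0:ℝ)) := by
      funext θ; exact (hd1 θ).deriv
    have hd2 : ∀ θ, HasDerivAt (deriv T)
        (a * k ^ 2 * Real.sinh (k * θ), a * k ^ 2 * Real.cosh (k * θ), 0) θ := by
      intro θ
      rw [hD1]
      have hkθ : HasDerivAt (fun θ : ℝ => k * θ) k θ := by
        simpa using (hasDerivAt_id θ).const_mul k
      have h1' : HasDerivAt (fun θ => a * k * Real.cosh (k * θ)) (a * k ^ 2 * Real.sinh (k * θ)) θ := by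
        have := ((Real.hasDerivAt_cosh (k * θ)).comp θ hkθ).const_mul (a * k)
        have e : a * k * (Real.sinh (k * θ) * k) = a * k ^ 2 * Real.sinh (k * θ) := by ring
        simpa [e] using this
      have h2' : HasDerivAt (fun θ => a * k * Real.sinh (k * θ)) (a * k ^ 2 * Real.cosh (k * θ)) θ := by
        have := ((Real.hasDerivAt_sinh (k * θ)).comp θ hkθ).const_mul (a * k)
        have e : a * k * (Real.cosh (k * θ) * k) = a * k ^ 2 * Real.cosh (k * θ) := by ring
        simpa [e] using this
      exact HasDerivAt.prodMk h1' (HasDerivAt.prodMk h2' (hasDerivAt_const θ (0:ℝ)))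
    have hD2 : deriv (deriv T) = fun θ =>
        (a * k ^ 2 * Real.sinh (k * θ), a * k ^ 2 * Real.cosh (k * θ), (0:ℝ)) := by
      funext θ; exact (hd2 θ).deriv
    have hd3 : ∀ θ, HasDerivAt (deriv (deriv T))
        (a * k ^ 3 * Real.cosh (k * θ), a * k ^ 3 * Real.sinh (k * θ), 0) θ := by
      intro θ
      rw [hD2]
      have hkθ : HasDerivAt (fun θ : ℝ => k * θ) k θ := by
        simpa using (hasDerivAt_id θ).const_mul k
      have h1' : HasDerivAt (fun θ => a * k ^ 2 * Real.sinh (k * θ)) (a * k ^ 3 * Real.cosh (k * θ)) θ := by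
        have := ((Real.hasDerivAt_sinh (k * θ)).comp θ hkθ).const_mul (a * k ^ 2)
        have e : a * k ^ 2 * (Real.cosh (k * θ) * k) = a * k ^ 3 * Real.cosh (k * θ) := by ring
        simpa [e] using this
      have h2' : HasDerivAt (fun θ => a * k ^ 2 * Real.cosh (k * θ)) (a * k ^ 3 * Real.sinh (k * θ)) θ := by
        have := ((Real.hasDerivAt_cosh (k * θ)).comp θ hkθ).const_mul (a * k ^ 2)
        have e : a * k ^ 2 * (Real.sinh (k * θ) * k) = a * k ^ 3 * Real.sinh (k * θ) := by ring
        simpa [e] using this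
      exact HasDerivAt.prodMk h1' (HasDerivAt.prodMk h2' (hasDerivAt_const θ (0:ℝ)))
    have hD3 : deriv (deriv (deriv T)) = fun θ =>
        (a * k ^ 3 * Real.cosh (k * θ), a * k ^ 3 * Real.sinh (k * θ), (0:ℝ)) := by
      funext θ; exact (hd3 θ).deriv
    intro θ
    rw [hD3, hD1]
    simp only [Prod.smul_def, smul_eq_mul, Prod.mk_sub_mk, Prod.mk_eq_zero]
    refine ⟨by rw [← hk2]; ring, by rw [← hk2]; ring, by ring⟩
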